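/- The generating function of involutions avoiding both 4321 and 132 is f(x) = −(x − x³ + x⁴)/((x−1)³(1+x)) = x + 2x² + 3x³ + 5x⁴ + ⋯, so the number of such involutions of length n is 1 + ⌈n/2⌉·⌊n/2⌋. -/

import Mathlib

open Equiv Finset

def Avoids4321 {n : ℕ} (π : Equiv.Perm (Fin n)) : Prop :=
  ¬ ∃ a b c d : Fin n, a < b ∧ b < c ∧ c < d ∧ π d < π c ∧ π c < π b ∧ π b < π a

def Avoids321 {n : ℕ} (π : Equiv.Perm (Fin n)) : Prop :=
  ¬ ∃ a b c : Fin n, a < b ∧ b < c ∧ π c < π b ∧ π b < π a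

def Avoids132 {n : ℕ} (π : Equiv.Perm (Fin n)) : Prop :=
  ¬ ∃ a b c : Fin n, a < b ∧ b < c ∧ π a < π c ∧ π c < π b

def Avoids312 {n : ℕ} (π : Equiv.Perm (Fin n)) : Prop :=
  ¬ ∃ a b c : Fin n, a < b ∧ b < c ∧ π b < π c ∧ π c < π a

def Avoids3412 {n : ℕ} (π : Equiv.Perm (Fin n)) : Prop :=
  ¬ ∃ a b c d : Fin n, a < b ∧ b < c ∧ c < d ∧ π c < π d ∧ π d < π a ∧ π a < π b

/-- The image of the index interval `[a,b]` under `π` is a contiguous set of values. -/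
def IsIntervalImage {n : ℕ} (π : Equiv.Perm (Fin n)) (a b : Fin n) : Prop :=
  ∀ i j k : Fin n, a ≤ i → i ≤ b → a ≤ j → j ≤ b → π i ≤ k → k ≤ π j →
    ∃ m : Fin n, a ≤ m ∧ m ≤ b ∧ π m = k

/-- A permutation is simple if its only intervals are the singletons and the whole interval. -/
def IsSimplePerm {n : ℕ} (π : Equiv.Perm (Fin n)) : Prop :=
  ∀ a b : Fin n, a < b → IsIntervalImage π a b → a.val = 0 ∧ b.val = n - 1

/-- A permutation is connected (sum-indecomposable). -/
def IsConnectedPerm {n : ℕ} (π : Equiv.Perm (Fin n)) : Prop :=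
  ¬ ∃ k : ℕ, 0 < k ∧ k < n ∧ ∀ i : Fin n, i.val < k → (π i).val < k

/-- The step of the Motzkin path associated to an involution at position `i`:
horizontal (0) at a fixed point, up (1) at an excedance, down (-1) at a deficiency. -/
def invStep {n : ℕ} (π : Equiv.Perm (Fin n)) (i : Fin n) : ℤ :=
  if π i = i then 0 else if i < π i then 1 else -1

/-- The height of the associated Motzkin path after the first `k` steps. -/
def heightUpTo {n : ℕ} (π : Equiv.Perm (Fin n)) (k : ℕ) : ℤ :=
  ∑ i ∈ Finset.univ.filter (fun i : Fin n => i.val < k), invStep π i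

/-- A Motzkin path, as its list of steps. -/
def IsMotzkinPath (l : List ℤ) : Prop :=
  (∀ s ∈ l, s = 1 ∨ s = 0 ∨ s = -1) ∧ l.sum = 0 ∧ ∀ p : List ℤ, p <+: l → 0 ≤ p.sum

/-- Number of involutions of length `n` avoiding 4321 and 132. -/
noncomputable def count4321x132 (n : ℕ) : ℕ :=
  Nat.card {π : Equiv.Perm (Fin n) // Function.Involutive ⇑π ∧ Avoids4321 π ∧
    Avoids132 π}

-- the shift-swap function
def sigF (n t k : ℕ) (i : Fin n) : Fin n :=
  if h : i.val < k ∧ i.val + t < n then ⟨i.val + t, h.2⟩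
  else if h2 : t ≤ i.val ∧ i.val < t + k then ⟨i.val - t, by omega⟩
  else i

lemma sigF_val {n t k : ℕ} (hk : 1 ≤ k) (hkt : k ≤ t) (htn : t + k ≤ n) (i : Fin n) :
    (i.val < k ∧ (sigF n t k i).val = i.val + t) ∨
    (k ≤ i.val ∧ i.val < t ∧ (sigF n t k i).val = i.val) ∨
    (t ≤ i.val ∧ i.val < t + k ∧ (sigF n t k i).val = i.val - t) ∨
    (t + k ≤ i.val ∧ (sigF n t k i).val = i.val) := by
  unfold sigF
  have := i.isLt
  split_ifs with h1 h2 <;> simp <;> omega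

lemma sigF_invol {n t k : ℕ} (hk : 1 ≤ k) (hkt : k ≤ t) (htn : t + k ≤ n) :
    Function.Involutive (sigF n t k) := by
  intro i
  have h1 := sigF_val hk hkt htn i
  have h2 := sigF_val hk hkt htn (sigF n t k i)
  apply Fin.ext
  omega

def sigP (n t k : ℕ) (hk : 1 ≤ k) (hkt : k ≤ t) (htn : t + k ≤ n) : Equiv.Perm (Fin n) :=
  (sigF_invol hk hkt htn).toPerm

lemma sigP_val {n t k : ℕ} (hk : 1 ≤ k) (hkt : k ≤ t) (htn : t + k ≤ n) (i : Fin n) :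
    (i.val < k ∧ ((sigP n t k hk hkt htn) i).val = i.val + t) ∨
    (k ≤ i.val ∧ i.val < t ∧ ((sigP n t k hk hkt htn) i).val = i.val) ∨
    (t ≤ i.val ∧ i.val < t + k ∧ ((sigP n t k hk hkt htn) i).val = i.val - t) ∨
    (t + k ≤ i.val ∧ ((sigP n t k hk hkt htn) i).val = i.val) :=
  sigF_val hk hkt htn i

lemma sigP_avoids4321 {n t k : ℕ} (hk : 1 ≤ k) (hkt : k ≤ t) (htn : t + k ≤ n) :
    Avoids4321 (sigP n t k hk hkt htn) := by
  rintro ⟨a, b, c, d, hab, hbc, hcd, h1, h2, h3⟩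
  have Ha := sigP_val hk hkt htn a
  have Hb := sigP_val hk hkt htn b
  have Hc := sigP_val hk hkt htn c
  have Hd := sigP_val hk hkt htn d
  rw [Fin.lt_def] at hab hbc hcd h1 h2 h3
  omega

lemma sigP_avoids132 {n t k : ℕ} (hk : 1 ≤ k) (hkt : k ≤ t) (htn : t + k ≤ n) :
    Avoids132 (sigP n t k hk hkt htn) := by
  rintro ⟨a, b, c, hab, hbc, h1, h2⟩
  have Ha := sigP_val hk hkt htn a
  have Hb := sigP_val hk hkt htn b
  have Hc := sigP_val hk hkt htn c
  rw [Fin.lt_def] at hab hbc h1 h2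
  omega

lemma classify {n : ℕ} (π : Equiv.Perm (Fin n)) (hinv : Function.Involutive ⇑π)
    (h4 : Avoids4321 π) (h1 : Avoids132 π) (hne : π ≠ 1) :
    ∃ t k : ℕ, 1 ≤ k ∧ k ≤ t ∧ t + k ≤ n ∧
      ∀ i : Fin n, (π i).val =
        if i.val < k then i.val + t
        else if t ≤ i.val ∧ i.val < t + k then i.val - t else i.val := by
  have hn : 0 < n := by
    by_contra h
    exact hne (Equiv.ext fun i => absurd i.isLt (by omega))
  set z : Fin n := ⟨0, hn⟩ with hzdef
  -- existence of an ascent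
  have hex : ∃ a : Fin n, a < π a := by
    have : ¬ ∀ i, π i = i := fun h => hne (Equiv.ext h)
    push_neg at this
    obtain ⟨a, ha⟩ := this
    rcases lt_or_gt_of_ne ha with h | h
    · exact ⟨π a, by rw [hinv a]; exact h⟩
    · exact ⟨a, h⟩
  have hzle : ∀ a : Fin n, z ≤ a := fun a => Fin.le_def.mpr (Nat.zero_le _)
  -- z is an ascent
  have hz : z < π z := by
    rcases Fin.lt_or_eq_of_le (hzle (π z)) with h | h
    · exact h
    · exfalso
      obtain ⟨a, ha⟩ := hex
      have haz : z < a := by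
        rcases Fin.lt_or_eq_of_le (hzle a) with h' | h'
        · exact h'
        · exact absurd ha (by rw [← h', ← h]; exact lt_irrefl _)
      exact h1 ⟨z, a, π a, haz, ha, by rw [← h, hinv a]; exact haz, by rw [hinv a]; exact ha⟩
  set t : ℕ := (π z).val with htdef
  have ht0 : 0 < t := hz
  have hπt : π (π z) = z := hinv z
  -- L2a
  have L2a : ∀ a : Fin n, z < a → a < π a → a.val < t := by
    intro a haz ha
    by_contra h
    rcases Nat.lt_or_ge t a.val with h' | h'
    · exact h1 ⟨π z, a, π a, h', ha, by rw [hπt, hinv a]; exact haz, by rw [hinv a]; exact ha⟩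
    · have : a = π z := Fin.ext (by omega)
      rw [this, hπt] at ha
      exact absurd (lt_trans haz (this ▸ ha)) (lt_irrefl _)
  -- L2b
  have L2b : ∀ a : Fin n, z < a → a < π a → t < (π a).val := by
    intro a haz ha
    by_contra h
    rcases Nat.lt_or_ge (π a).val t with h' | h'
    · exact h4 ⟨z, a, π a, π z, haz, ha, h', by rw [hπt, hinv a]; exact haz,
        by rw [hinv a]; exact ha, h'⟩
    · have : π a = π z := Fin.ext (by omega)
      have := π.injective this
      rw [this] at haz; exact absurd haz (lt_irrefl _)
  -- t ≤ π a for every ascent a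
  have L2b' : ∀ a : Fin n, a < π a → t ≤ (π a).val := by
    intro a ha
    rcases Fin.lt_or_eq_of_le (hzle a) with h' | h'
    · exact le_of_lt (L2b a h' ha)
    · rw [← h']
  -- ascents are < t (or are z)
  have L2a' : ∀ a : Fin n, a < π a → a.val < t := by
    intro a ha
    rcases Fin.lt_or_eq_of_le (hzle a) with h' | h'
    · exact L2a a h' ha
    · rw [← h']; exact ht0
  -- L3 parallel
  have L3 : ∀ a b : Fin n, a < π a → b < π b → a < b → π a < π b := by
    intro a b ha hb hab
    by_contra h
    rcases Fin.lt_or_eq_of_le (not_lt.mp h : π b ≤ π a) with h' | h'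
    · exact h4 ⟨a, b, π b, π a, hab, hb, h', by rw [hinv b, hinv a]; exact hab,
        by rw [hinv b]; exact hb, h'⟩
    · rw [π.injective h'] at hab; exact absurd hab (lt_irrefl _)
  -- L4: no fixed point below an ascent
  have L4 : ∀ f a : Fin n, π f = f → a < π a → ¬ f < a := by
    intro f a hf ha hfa
    exact h1 ⟨f, a, π a, hfa, ha, by rw [hf, hinv a]; exact hfa, by rw [hinv a]; exact ha⟩
  -- L5
  have L5 : ∀ f a b : Fin n, π f = f → a < π a → b < π b → π a < f → f < π b → False := by
    intro f a b hf ha hb h₁ h₂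
    have hab : a < b := by
      by_contra h
      rcases Fin.lt_or_eq_of_le (not_lt.mp h : b ≤ a) with h' | h'
      · exact absurd (lt_trans (lt_trans (L3 b a hb ha h') h₁) h₂) (lt_irrefl _)
      · rw [h'] at h₂; exact absurd (lt_trans h₁ h₂) (lt_irrefl _)
    have hbf : b < f := by
      have h₃ : t ≤ (π a).val := L2b' a ha
      have h₄ : b.val < t := L2a' b hb
      have : (π a).val < f.val := h₁
      exact Fin.lt_def.mpr (by omega)
    exact h1 ⟨a, b, f, hab, hbf, lt_of_lt_of_le h₁ (le_of_eq hf.symm),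
      lt_of_le_of_lt (le_of_eq hf) h₂⟩
  classical
  -- least non-ascent index
  have hkex : ∃ i : ℕ, ∀ h : i < n, ¬ ((⟨i, h⟩ : Fin n) < π ⟨i, h⟩) :=
    ⟨n, fun h => absurd h (lt_irrefl n)⟩
  set k : ℕ := Nat.find hkex with hkdef
  have hk_spec : ∀ h : k < n, ¬ ((⟨k, h⟩ : Fin n) < π ⟨k, h⟩) := Nat.find_spec hkex
  have hascent : ∀ (i : ℕ) (h : i < n), i < k → (⟨i, h⟩ : Fin n) < π ⟨i, h⟩ := by
    intro i h hik
    have h2 := Nat.find_min hkex hik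
    rcases not_forall.mp h2 with ⟨h', hx⟩
    exact not_not.mp hx
  have hkn : k ≤ n := Nat.find_min' hkex (fun h => absurd h (lt_irrefl n))
  have hk1 : 1 ≤ k := by
    rcases Nat.eq_zero_or_pos k with h | h
    · exfalso
      rw [h] at hk_spec
      exact hk_spec hn hz
    · exact h
  have hkm1 : k - 1 < n := by omega
  have he : (⟨k - 1, hkm1⟩ : Fin n) < π ⟨k - 1, hkm1⟩ := hascent (k - 1) hkm1 (by omega)
  have hkt : k ≤ t := by
    have h2 : k - 1 < t := L2a' _ he
    omega
  -- all ascents are < k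
  have hS : ∀ a : Fin n, a < π a → a.val < k := by
    intro a ha
    by_contra h
    have hka : k ≤ a.val := not_lt.mp h
    have hkln : k < n := lt_of_le_of_lt hka a.isLt
    have hnc : ¬ ((⟨k, hkln⟩ : Fin n) < π ⟨k, hkln⟩) := hk_spec hkln
    rcases lt_trichotomy (π (⟨k, hkln⟩ : Fin n)) ⟨k, hkln⟩ with h' | h' | h'
    · have hb : π (⟨k, hkln⟩ : Fin n) < π (π ⟨k, hkln⟩) := by rw [hinv]; exact h'
      have h2 := L2b' _ hb
      rw [hinv] at h2
      have h3 : t ≤ k := h2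
      have h4 : a.val < t := L2a' a ha
      omega
    · rcases Nat.eq_or_lt_of_le hka with h'' | h''
      · have : (⟨k, hkln⟩ : Fin n) = a := Fin.ext h''
        rw [this] at hnc
        exact hnc ha
      · exact L4 _ a h' ha (Fin.lt_def.mpr h'')
    · exact hnc h'
  set M : ℕ := (π (⟨k - 1, hkm1⟩ : Fin n)).val with hMdef
  have hMn : M < n := (π (⟨k - 1, hkm1⟩ : Fin n)).isLt
  have hMmax : ∀ a : Fin n, a < π a → (π a).val ≤ M := by
    intro a ha
    rcases lt_trichotomy a.val (k - 1) with h | h | h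
    · exact le_of_lt (L3 a _ ha he (Fin.lt_def.mpr h))
    · have : a = ⟨k - 1, hkm1⟩ := Fin.ext h
      rw [this]
    · have h2 := hS a ha
      omega
  have hT : ∀ j : Fin n, π j < j ↔ (t ≤ j.val ∧ j.val ≤ M) := by
    intro j
    constructor
    · intro hj
      have hb : π j < π (π j) := by rw [hinv]; exact hj
      have h₁ := L2b' (π j) hb
      have h₂ := hMmax (π j) hb
      rw [hinv] at h₁ h₂
      exact ⟨h₁, h₂⟩
    · rintro ⟨h₁, h₂⟩
      rcases lt_trichotomy (π j) j with h | h | h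
      · exact h
      · exfalso
        rcases Nat.eq_or_lt_of_le h₁ with h₃ | h₃
        · have hjz : j = π z := Fin.ext (by omega)
          rw [hjz, hπt] at h
          exact absurd h (ne_of_lt hz)
        · rcases Nat.eq_or_lt_of_le h₂ with h₄ | h₄
          · have hje : j = π ⟨k - 1, hkm1⟩ := Fin.ext (by omega)
            have h6 : π j = ⟨k - 1, hkm1⟩ := by rw [hje, hinv]
            rw [h6] at h
            have h7 : k - 1 = j.val := congrArg Fin.val h
            have h8 : j.val < t := by omega
            omega
          · exact L5 j z _ h hz he (Fin.lt_def.mpr (by omega)) (Fin.lt_def.mpr (by omega))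
      · have h2 := hS j h
        have h3 : j.val < t := L2a' j h
        omega
  have hform : ∀ i : ℕ, ∀ h : i < n, i < k → (π ⟨i, h⟩).val = t + i := by
    intro i
    induction i using Nat.strong_induction_on with
    | _ i ih =>
      intro h hik
      have ha : (⟨i, h⟩ : Fin n) < π ⟨i, h⟩ := hascent i h hik
      have hlow : t + i ≤ (π (⟨i, h⟩ : Fin n)).val := by
        rcases Nat.eq_zero_or_pos i with h0 | h0
        · have hiz : (⟨i, h⟩ : Fin n) = z := Fin.ext h0
          rw [hiz, ← htdef]
          omega
        · have hm1 : i - 1 < n := by omega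
          have hp : (π (⟨i - 1, hm1⟩ : Fin n)).val = t + (i - 1) :=
            ih (i - 1) (by omega) hm1 (by omega)
          have hlt' : π (⟨i - 1, hm1⟩ : Fin n) < π ⟨i, h⟩ :=
            L3 _ _ (hascent _ hm1 (by omega)) ha (Fin.lt_def.mpr (show i - 1 < i by omega))
          have hlt'' : (π (⟨i - 1, hm1⟩ : Fin n)).val < (π (⟨i, h⟩ : Fin n)).val := hlt'
          omega
      rcases Nat.eq_or_lt_of_le hlow with heq | hlt
      · omega
      · exfalso
        have hub : (π (⟨i, h⟩ : Fin n)).val ≤ M := hMmax _ ha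
        have hvn : t + i < n := by omega
        have hdesc : π (⟨t + i, hvn⟩ : Fin n) < (⟨t + i, hvn⟩ : Fin n) :=
          (hT _).mpr ⟨show t ≤ t + i by omega, show t + i ≤ M by omega⟩
        have hb : π (⟨t + i, hvn⟩ : Fin n) < π (π (⟨t + i, hvn⟩ : Fin n)) := by
          rw [hinv]; exact hdesc
        have hbk : (π (⟨t + i, hvn⟩ : Fin n)).val < k := hS _ hb
        have hppj : π (π (⟨t + i, hvn⟩ : Fin n)) = ⟨t + i, hvn⟩ := hinv _
        rcases lt_trichotomy (π (⟨t + i, hvn⟩ : Fin n)).val i with h' | h' | h'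
        · have h5 := ih (π (⟨t + i, hvn⟩ : Fin n)).val h' (π (⟨t + i, hvn⟩ : Fin n)).isLt
            (by omega)
          rw [Fin.eta, hppj] at h5
          have h6 : t + i = t + (π (⟨t + i, hvn⟩ : Fin n)).val := h5
          omega
        · have h6 : π (⟨t + i, hvn⟩ : Fin n) = ⟨i, h⟩ := Fin.ext h'
          have h7 : (π (⟨i, h⟩ : Fin n)).val = t + i := by rw [← h6, hppj]
          omega
        · have h8 := L3 ⟨i, h⟩ _ ha hb (Fin.lt_def.mpr h')
          rw [hppj] at h8
          have h9 : (π (⟨i, h⟩ : Fin n)).val < t + i := h8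
          omega
  have hMk : M = t + (k - 1) := hform (k - 1) hkm1 (by omega)
  have htkn : t + k ≤ n := by omega
  refine ⟨t, k, hk1, hkt, htkn, ?_⟩
  intro i
  split_ifs with h₁ h₂
  · have h2 := hform i.val i.isLt h₁
    rw [Fin.eta] at h2
    omega
  · have hd : π i < i := (hT i).mpr ⟨h₂.1, by omega⟩
    have hb : π i < π (π i) := by rw [hinv]; exact hd
    have h2 := hform (π i).val (π i).isLt (hS (π i) hb)
    rw [Fin.eta, hinv] at h2
    omega
  · rcases lt_trichotomy (π i) i with h | h | h
    · exfalso
      rw [hT i] at h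
      omega
    · rw [h]
    · exfalso
      have h2 := hS i h
      have h3 : i.val < t := L2a' i h
      omega

def Ppairs (n : ℕ) : Finset (ℕ × ℕ) :=
  (Finset.range (n + 1) ×ˢ Finset.range (n + 1)).filter
    fun p => 1 ≤ p.2 ∧ p.2 ≤ p.1 ∧ p.1 + p.2 ≤ n

lemma mem_Ppairs {n : ℕ} {p : ℕ × ℕ} :
    p ∈ Ppairs n ↔ 1 ≤ p.2 ∧ p.2 ≤ p.1 ∧ p.1 + p.2 ≤ n := by
  simp only [Ppairs, mem_filter, mem_product, mem_range]
  omega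

lemma card_Ppairs (n : ℕ) : (Ppairs n).card = (n + 1) / 2 * (n / 2) := by
  induction n with
  | zero => decide
  | succ n ih =>
    have hsplit : Ppairs (n + 1) = Ppairs n ∪
        ((Finset.Icc 1 ((n + 1) / 2)).image fun j => (n + 1 - j, j)) := by
      ext ⟨a, b⟩
      simp only [mem_union, mem_Ppairs, mem_image, mem_Icc, Prod.mk.injEq]
      constructor
      · rintro ⟨h1, h2, h3⟩
        rcases Nat.lt_or_ge (a + b) (n + 1) with h | h
        · exact Or.inl ⟨h1, h2, by omega⟩
        · exact Or.inr ⟨b, by omega, by omega, rfl⟩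
      · rintro (⟨h1, h2, h3⟩ | ⟨j, hj, hp1, hp2⟩)
        · exact ⟨h1, h2, by omega⟩
        · refine ⟨by omega, by omega, by omega⟩
    have hdisj : Disjoint (Ppairs n)
        ((Finset.Icc 1 ((n + 1) / 2)).image fun j => (n + 1 - j, j)) := by
      rw [Finset.disjoint_left]
      intro p hp hq
      rw [mem_Ppairs] at hp
      simp only [mem_image, mem_Icc] at hq
      obtain ⟨j, hj, hq⟩ := hq
      rw [← hq] at hp
      simp at hp
      omega
    have hcard2 : ((Finset.Icc 1 ((n + 1) / 2)).image fun j => (n + 1 - j, j)).card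
        = (n + 1) / 2 := by
      rw [Finset.card_image_of_injective]
      · simp
      · intro a b hab
        simpa using congrArg Prod.snd hab
    rw [hsplit, Finset.card_union_of_disjoint hdisj, ih, hcard2]
    rcases Nat.even_or_odd n with ⟨m, hm⟩ | ⟨m, hm⟩ <;> subst hm
    · have e1 : (m + m + 1 + 1) / 2 = m + 1 := by omega
      have e2 : (m + m + 1) / 2 = m := by omega
      have e3 : (m + m) / 2 = m := by omega
      rw [e1, e2, e3]; ring
    · have e1 : (2 * m + 1 + 1 + 1) / 2 = m + 1 := by omega
      have e2 : (2 * m + 1 + 1) / 2 = m + 1 := by omega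
      have e3 : (2 * m + 1) / 2 = m := by omega
      rw [e1, e2, e3]; ring

-- NEW MATERIAL
lemma pred_one (n : ℕ) : Function.Involutive ⇑(1 : Equiv.Perm (Fin n)) ∧
    Avoids4321 (1 : Equiv.Perm (Fin n)) ∧ Avoids132 (1 : Equiv.Perm (Fin n)) := by
  refine ⟨fun x => rfl, ?_, ?_⟩
  · rintro ⟨a, b, c, d, hab, hbc, hcd, h1, h2, h3⟩
    simp only [Equiv.Perm.coe_one, id_eq] at h1
    exact absurd h1 (not_lt.mpr (le_of_lt hcd))
  · rintro ⟨a, b, c, hab, hbc, h1, h2⟩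
    simp only [Equiv.Perm.coe_one, id_eq] at h2
    exact absurd h2 (not_lt.mpr (le_of_lt hbc))

lemma sigP_ne_one {n t k : ℕ} (hk : 1 ≤ k) (hkt : k ≤ t) (htn : t + k ≤ n) :
    sigP n t k hk hkt htn ≠ 1 := by
  intro h
  have h0n : 0 < n := by omega
  have hv := sigP_val hk hkt htn (⟨0, h0n⟩ : Fin n)
  rw [h] at hv
  simp only [Equiv.Perm.coe_one, id_eq] at hv
  omega

lemma sigP_inj {n t k t' k' : ℕ} (hk : 1 ≤ k) (hkt : k ≤ t) (htn : t + k ≤ n)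
    (hk' : 1 ≤ k') (hkt' : k' ≤ t') (htn' : t' + k' ≤ n)
    (h : sigP n t k hk hkt htn = sigP n t' k' hk' hkt' htn') : t = t' ∧ k = k' := by
  have h0n : 0 < n := by omega
  have e0 := congrArg (fun σ : Equiv.Perm (Fin n) => (σ (⟨0, h0n⟩ : Fin n)).val) h
  have hz0 : ((⟨0, h0n⟩ : Fin n)).val = 0 := rfl
  have v0 := sigP_val hk hkt htn (⟨0, h0n⟩ : Fin n)
  have v0' := sigP_val hk' hkt' htn' (⟨0, h0n⟩ : Fin n)
  have ht : t = t' := by omega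
  have hmn : min k k' < n := by omega
  have em := congrArg (fun σ : Equiv.Perm (Fin n) => (σ (⟨min k k', hmn⟩ : Fin n)).val) h
  have hmv : ((⟨min k k', hmn⟩ : Fin n)).val = min k k' := rfl
  have vm := sigP_val hk hkt htn (⟨min k k', hmn⟩ : Fin n)
  have vm' := sigP_val hk' hkt' htn' (⟨min k k', hmn⟩ : Fin n)
  exact ⟨ht, by omega⟩

noncomputable def Fmap (n : ℕ) :
    Option {p // p ∈ Ppairs n} →
      {π : Equiv.Perm (Fin n) // Function.Involutive ⇑π ∧ Avoids4321 π ∧ Avoids132 π}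
  | none => ⟨1, pred_one n⟩
  | some q =>
      ⟨sigP n q.1.1 q.1.2 (mem_Ppairs.mp q.2).1 (mem_Ppairs.mp q.2).2.1
          (mem_Ppairs.mp q.2).2.2,
        sigF_invol (mem_Ppairs.mp q.2).1 (mem_Ppairs.mp q.2).2.1 (mem_Ppairs.mp q.2).2.2,
        sigP_avoids4321 _ _ _, sigP_avoids132 _ _ _⟩

lemma Fmap_none_val (n : ℕ) : (Fmap n none).val = 1 := rfl

lemma Fmap_some_val (n : ℕ) (q : {p // p ∈ Ppairs n}) :
    (Fmap n (some q)).val = sigP n q.1.1 q.1.2 (mem_Ppairs.mp q.2).1 (mem_Ppairs.mp q.2).2.1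
      (mem_Ppairs.mp q.2).2.2 := rfl

lemma sigP_eq_of_form {n t k : ℕ} (hk : 1 ≤ k) (hkt : k ≤ t) (htn : t + k ≤ n)
    (π : Equiv.Perm (Fin n))
    (hform : ∀ i : Fin n, (π i).val =
      if i.val < k then i.val + t
      else if t ≤ i.val ∧ i.val < t + k then i.val - t else i.val) :
    sigP n t k hk hkt htn = π := by
  apply Equiv.ext
  intro i
  apply Fin.ext
  have hv := sigP_val hk hkt htn i
  have hf := hform i
  split_ifs at hf <;> omega

lemma Fmap_bij (n : ℕ) : Function.Bijective (Fmap n) := by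
  constructor
  · rintro (_ | q) (_ | q') h
    · rfl
    · exfalso
      have := congrArg Subtype.val h
      rw [Fmap_none_val, Fmap_some_val] at this
      exact sigP_ne_one _ _ _ this.symm
    · exfalso
      have := congrArg Subtype.val h
      rw [Fmap_none_val, Fmap_some_val] at this
      exact sigP_ne_one _ _ _ this
    · have := congrArg Subtype.val h
      rw [Fmap_some_val, Fmap_some_val] at this
      obtain ⟨ht, hk⟩ := sigP_inj _ _ _ _ _ _ this
      congr 1
      apply Subtype.ext
      exact Prod.ext ht hk
  · rintro ⟨π, hπ1, hπ2, hπ3⟩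
    by_cases hne : π = 1
    · exact ⟨none, by apply Subtype.ext; rw [Fmap_none_val]; exact hne.symm⟩
    · obtain ⟨t, k, h1, h2, h3, hform⟩ := classify π hπ1 hπ2 hπ3 hne
      refine ⟨some ⟨(t, k), mem_Ppairs.mpr ⟨h1, h2, h3⟩⟩, ?_⟩
      apply Subtype.ext
      rw [Fmap_some_val]
      exact sigP_eq_of_form _ _ _ π hform


lemma count_eq (n : ℕ) : count4321x132 n = 1 + (n + 1) / 2 * (n / 2) := by
  have hcc := Nat.card_congr (Equiv.ofBijective _ (Fmap_bij n)).symm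
  rw [count4321x132, hcc, Finite.card_option, Nat.card_eq_finsetCard, card_Ppairs]
  omega

open PowerSeries in
theorem gfpart :
    (PowerSeries.mk fun n => if n = 0 then (0 : ℚ) else (count4321x132 n : ℚ)) *
        ((PowerSeries.X - 1) ^ 3 * (1 + PowerSeries.X))
      = -(PowerSeries.X - PowerSeries.X ^ 3 + PowerSeries.X ^ 4) := by
  set A : ℚ⟦X⟧ := PowerSeries.mk fun n => if n = 0 then (0 : ℚ) else (count4321x132 n : ℚ)
    with hA
  have h2 : (PowerSeries.C (2 : ℚ)) = (2 : ℚ⟦X⟧) := by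
    exact map_ofNat _ 2
  have expand : A * ((X - 1) ^ 3 * (1 + X)) =
      A * X ^ 4 - (A * PowerSeries.C (2 : ℚ)) * X ^ 3 + (A * PowerSeries.C (2 : ℚ)) * X ^ 1 - A := by
    rw [h2]; ring
  rw [expand]
  apply PowerSeries.ext
  intro n
  simp only [map_sub, map_add, map_neg, PowerSeries.coeff_mul_X_pow',
    PowerSeries.coeff_mul_C, hA, PowerSeries.coeff_mk, PowerSeries.coeff_X,
    PowerSeries.coeff_X_pow, count_eq]
  rcases n with _ | _ | _ | _ | _ | m
  · norm_num
  · norm_num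
  · norm_num
  · norm_num
  · norm_num
  · have e1 : m + 1 + 1 + 1 + 1 + 1 = m + 5 := by omega
    rw [e1]
    have h4 : (4 : ℕ) ≤ m + 5 := by omega
    have h3 : (3 : ℕ) ≤ m + 5 := by omega
    have h1 : (1 : ℕ) ≤ m + 5 := by omega
    simp only [if_pos h4, if_pos h3, if_pos h1, if_neg (by omega : ¬ m + 5 = 0),
      if_neg (by omega : ¬ m + 5 - 4 = 0), if_neg (by omega : ¬ m + 5 - 3 = 0),
      if_neg (by omega : ¬ m + 5 - 1 = 0), if_neg (by omega : ¬ m + 5 = 1),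
      if_neg (by omega : ¬ m + 5 = 3), if_neg (by omega : ¬ m + 5 = 4)]
    have e4 : m + 5 - 4 = m + 1 := by omega
    have e3 : m + 5 - 3 = m + 2 := by omega
    have e0 : m + 5 - 1 = m + 4 := by omega
    rw [e4, e3, e0]
    rcases Nat.even_or_odd m with ⟨j, hj⟩ | ⟨j, hj⟩ <;> subst hj
    · have d1 : (j + j + 1 + 1) / 2 = j + 1 := by omega
      have d2 : (j + j + 1) / 2 = j := by omega
      have d3 : (j + j + 2 + 1) / 2 = j + 1 := by omega
      have d4 : (j + j + 2) / 2 = j + 1 := by omega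
      have d5 : (j + j + 4 + 1) / 2 = j + 2 := by omega
      have d6 : (j + j + 4) / 2 = j + 2 := by omega
      have d7 : (j + j + 5 + 1) / 2 = j + 3 := by omega
      have d8 : (j + j + 5) / 2 = j + 2 := by omega
      simp only [d1, d2, d3, d4, d5, d6, d7, d8]
      push_cast
      ring
    · have d1 : (2 * j + 1 + 1 + 1) / 2 = j + 1 := by omega
      have d2 : (2 * j + 1 + 1) / 2 = j + 1 := by omega
      have d3 : (2 * j + 1 + 2 + 1) / 2 = j + 2 := by omega
      have d4 : (2 * j + 1 + 2) / 2 = j + 1 := by omega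
      have d5 : (2 * j + 1 + 4 + 1) / 2 = j + 3 := by omega
      have d6 : (2 * j + 1 + 4) / 2 = j + 2 := by omega
      have d7 : (2 * j + 1 + 5 + 1) / 2 = j + 3 := by omega
      have d8 : (2 * j + 1 + 5) / 2 = j + 3 := by omega
      simp only [d1, d2, d3, d4, d5, d6, d7, d8]
      push_cast
      ring

/-- `f(x) = −(x − x³ + x⁴)/((x−1)³(1+x))`, and the number of involutions of
length `n` avoiding 4321 and 132 is `1 + ⌈n/2⌉·⌊n/2⌋`. -/
theorem stmt12 :
    (∀ n : ℕ, 1 ≤ n → count4321x132 n = 1 + (n + 1) / 2 * (n / 2)) ∧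
    (PowerSeries.mk fun n => if n = 0 then (0 : ℚ) else (count4321x132 n : ℚ)) *
        ((PowerSeries.X - 1) ^ 3 * (1 + PowerSeries.X))
      = -(PowerSeries.X - PowerSeries.X ^ 3 + PowerSeries.X ^ 4) := by
  exact ⟨fun n _ => count_eq n, gfpart⟩
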